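/- Let g be a random sampled graph derived from G, and let u ≠ s be a fixed vertex. Then E[σ(s,g) − σ^{→u}(s,g)] = E({s}, G[V\{u}]), i.e., the expected number of vertices reachable from s in g not requiring passage through u equals the expected spread in G with u blocked. -/

import Mathlib

/-!
Independent cascade model via random sampled (live-edge) graphs.
-/

open Finset

noncomputable section
open scoped Classical

variable {V : Type*}

/-- Probability weight of a sampled graph `ω`. -/
def sampleWeight [Fintype V] (p : V → V → ℝ) (ω : V → V → Bool) : ℝ :=
  ∏ u : V, ∏ v : V, if ω u v then p u v else 1 - p u v

/-- Reachability from `s` to `w` in the sampled graph `ω`, through vertices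
outside the blocker set `B`. -/
def ReachB (ω : V → V → Bool) (B : Finset V) (s w : V) : Prop :=
  Relation.ReflTransGen (fun a b => ω a b = true ∧ a ∉ B ∧ b ∉ B) s w

/-- Number of vertices reachable from the seed set `S` in the sampled graph `ω`
restricted to `V \ B`. -/
def sigmaB [Fintype V] (ω : V → V → Bool) (B S : Finset V) : ℕ :=
  (Finset.univ.filter fun w => ∃ s ∈ S, ReachB ω B s w).card

/-- Expected spread of seed set `S` when the blocker set `B` is removed. -/
def spread [Fintype V] (p : V → V → ℝ) (S B : Finset V) : ℝ :=
  ∑ ω : V → V → Bool, sampleWeight p ω * (sigmaB ω B S : ℝ)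

/-- `sigmaThrough ω u s` = `σ^{→u}(s, ω)`: the number of vertices `w` reachable
from `s` in the sampled graph `ω` such that every path from `s` to `w`
passes through `u`. -/
def sigmaThrough [Fintype V] (ω : V → V → Bool) (u s : V) : ℕ :=
  (Finset.univ.filter fun w => ReachB ω ∅ s w ∧ ¬ ReachB ω {u} s w).card

/-- Reachability avoiding a blocker set implies unrestricted reachability. -/
lemma ReachB.mono_empty {ω : V → V → Bool} {B : Finset V} {s w : V}
    (h : ReachB ω B s w) : ReachB ω ∅ s w := by
  refine Relation.ReflTransGen.mono ?_ _ _ h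
  intro a b hab
  exact ⟨hab.1, by simp, by simp⟩

/-- `E[σ(s,g) - σ^{→u}(s,g)] = E({s}, G[V \ {u}])`: the expected
number of vertices reachable from `s` not requiring passage through `u` equals
the expected spread in `G` with `u` blocked. -/
theorem expected_sigma_minus_through_eq_blocked_spread [Fintype V]
    (p : V → V → ℝ) (hp : ∀ u v, 0 ≤ p u v ∧ p u v ≤ 1)
    (s u : V) (hsu : u ≠ s) :
    (∑ ω : V → V → Bool,
        sampleWeight p ω * ((sigmaB ω ∅ {s} : ℝ) - (sigmaThrough ω u s : ℝ))) =
      spread p {s} {u} := by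
  unfold spread
  refine Finset.sum_congr rfl fun ω _ => ?_
  congr 1
  have key : (sigmaB ω ∅ {s} : ℝ) - (sigmaThrough ω u s : ℝ) = (sigmaB ω {u} {s} : ℝ) := by
    have h1 : sigmaB ω ∅ {s}
        = (Finset.univ.filter fun w => ReachB ω ∅ s w).card := by
      unfold sigmaB; congr 1; apply Finset.filter_congr; intro w _; simp
    have h2 : sigmaB ω {u} {s}
        = (Finset.univ.filter fun w => ReachB ω {u} s w).card := by
      unfold sigmaB; congr 1; apply Finset.filter_congr; intro w _; simp
    have h3 : (Finset.univ.filter fun w => ReachB ω {u} s w)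
        = (Finset.univ.filter fun w => ReachB ω ∅ s w ∧ ReachB ω {u} s w) := by
      apply Finset.filter_congr; intro w _
      constructor
      · intro h; exact ⟨h.mono_empty, h⟩
      · exact fun h => h.2
    have h4 : sigmaThrough ω u s + sigmaB ω {u} {s} = sigmaB ω ∅ {s} := by
      rw [h1, h2, h3]
      unfold sigmaThrough
      have := Finset.card_filter_add_card_filter_not
        (s := Finset.univ.filter fun w => ReachB ω ∅ s w)
        (p := fun w => ReachB ω {u} s w)
      rw [Finset.filter_filter, Finset.filter_filter] at this
      omega
    have h5 : (sigmaThrough ω u s : ℝ) + (sigmaB ω {u} {s} : ℝ) = (sigmaB ω ∅ {s} : ℝ) := by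
      exact_mod_cast h4
    linarith
  rw [key]
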